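/- Let a0 and c0 be real numbers with 0 < c0 < a0 < 1. Then there exists a probability mass function μ on Bool × Bool × Bool (with coordinates interpreted as (X, A, B1)) such that: each of the events {A = 1} and {A = 0} has positive μ-probability, each of the four events {A = a, B1 = b} for a, b ∈ {0, 1} has positive μ-probability, the conditional probabilities satisfy P(X = 1 | A = 1) = a0 and P(X = 1 | A = 0) = c0, and for each b ∈ {0, 1} one has P(X = 1 | A = 1, B1 = b) < P(X = 1 | A = 0, B1 = b). -/

import Mathlib

set_option maxHeartbeats 1000000

open Finset

/-- The probability of an event `E` under a probability mass function `μ` on a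
finite type. -/
def prob {Ω : Type*} [Fintype Ω] (μ : Ω → ℝ) (E : Ω → Prop) [DecidablePred E] : ℝ :=
  ∑ ω, if E ω then μ ω else 0

/-- The conditional probability `P(E | F) = P(E ∩ F) / P(F)` under a probability
mass function `μ` on a finite type. -/
noncomputable def condProb {Ω : Type*} [Fintype Ω] (μ : Ω → ℝ) (E F : Ω → Prop)
    [DecidablePred E] [DecidablePred F] : ℝ :=
  prob μ (fun ω => E ω ∧ F ω) / prob μ F

/-- Existence of the classic Simpson's Paradox as a probability distribution on
`(X, A, B1)` with prescribed aggregate success rates `P(X=1|A=1) = a0` and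
`P(X=1|A=0) = c0` with `c0 < a0`, where the inequality reverses conditionally
on each level of `B1`. -/
theorem simpson_paradox_pmf (a0 c0 : ℝ) (hc : 0 < c0) (hca : c0 < a0) (ha : a0 < 1) :
    ∃ μ : Bool × Bool × Bool → ℝ,
      (∀ p, 0 ≤ μ p) ∧ (∑ p, μ p = 1) ∧
      (∀ a : Bool, 0 < prob μ (fun p => p.2.1 = a)) ∧
      (∀ a b : Bool, 0 < prob μ (fun p => p.2.1 = a ∧ p.2.2 = b)) ∧
      condProb μ (fun p => p.1 = true) (fun p => p.2.1 = true) = a0 ∧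
      condProb μ (fun p => p.1 = true) (fun p => p.2.1 = false) = c0 ∧
      (∀ b : Bool,
        condProb μ (fun p => p.1 = true) (fun p => p.2.1 = true ∧ p.2.2 = b) <
        condProb μ (fun p => p.1 = true) (fun p => p.2.1 = false ∧ p.2.2 = b)) := by
  have ha0 : (0:ℝ) < a0 := lt_trans hc hca
  have h1a : (0:ℝ) < 1 + a0 := by linarith
  have ha1 : (0:ℝ) < 1 - a0 := by linarith
  have hd : (0:ℝ) < 3 + a0 - 2 * c0 := by linarith
  set v : ℝ := 2 * c0 / (3 + a0 - 2 * c0) with hv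
  have hv0 : 0 < v := by positivity
  have hv1 : 0 < 1 - v := by
    have : v < 1 := by rw [hv, div_lt_one hd]; linarith
    linarith
  have hc1 : (0:ℝ) < 1 - c0 / 2 := by linarith
  have hst : (0:ℝ) < 1 - (3 + a0) / 4 := by linarith
  refine ⟨fun p => match p with
    | (true, true, true) => a0 / 2
    | (false, true, true) => a0 * (1 - a0) / (2 * (1 + a0))
    | (true, true, false) => 0
    | (false, true, false) => (1 - a0) / (2 * (1 + a0))
    | (true, false, true) => v * ((3 + a0) / 4) / 2
    | (false, false, true) => v * (1 - (3 + a0) / 4) / 2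
    | (true, false, false) => (1 - v) * (c0 / 2) / 2
    | (false, false, false) => (1 - v) * (1 - c0 / 2) / 2, ?_, ?_, ?_, ?_, ?_, ?_, ?_⟩
  · rintro ⟨x, a, b⟩
    rcases x <;> rcases a <;> rcases b <;> simp <;>
      [skip; skip; skip; skip; skip; skip; skip] <;>
      first
        | linarith [mul_pos hv1 hc1, mul_pos hv0 hst, mul_pos hv1 hc, mul_pos hv0 h1a]
        | (apply div_nonneg <;> linarith [mul_pos ha0 ha1])
  · simp [Fintype.sum_prod_type]
    field_simp
    ring
  · intro a
    rcases a <;> simp [prob, Fintype.sum_prod_type] <;>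
      linarith [mul_pos hv1 hc1, mul_pos hv0 hst, mul_pos hv1 hc, mul_pos hv0 h1a,
        mul_pos ha1 (inv_pos.mpr (by linarith : (0:ℝ) < 2 * (1 + a0))),
        div_pos ha1 (by linarith : (0:ℝ) < 2 * (1 + a0)),
        div_pos (mul_pos ha0 ha1) (by linarith : (0:ℝ) < 2 * (1 + a0))]
  · intro a b
    rcases a <;> rcases b <;> simp [prob, Fintype.sum_prod_type] <;>
      linarith [mul_pos hv1 hc1, mul_pos hv0 hst, mul_pos hv1 hc, mul_pos hv0 h1a,
        div_pos ha1 (by linarith : (0:ℝ) < 2 * (1 + a0)),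
        div_pos (mul_pos ha0 ha1) (by linarith : (0:ℝ) < 2 * (1 + a0))]
  · simp [condProb, prob, Fintype.sum_prod_type]
    have ha0' : a0 ≠ 0 := ha0.ne'
    have h1a' : (1 + a0 : ℝ) ≠ 0 := h1a.ne'
    field_simp
    ring_nf
  · simp [condProb, prob, Fintype.sum_prod_type]
    have hd' : (3 + a0 - 2 * c0 : ℝ) ≠ 0 := hd.ne'
    have hden : v * ((3 + a0) / 4) / 2 + (1 - v) * (c0 / 2) / 2 +
        (v * (1 - (3 + a0) / 4) / 2 + (1 - v) * (1 - c0 / 2) / 2) = 1 / 2 := by ring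
    rw [hden, div_eq_iff (by norm_num : (1:ℝ)/2 ≠ 0), hv]
    field_simp
    ring
  · intro b
    rcases b <;> simp [condProb, prob, Fintype.sum_prod_type]
    · apply div_pos
      · linarith [mul_pos hv1 hc]
      · linarith [mul_pos hv1 hc, mul_pos hv1 hc1]
    · have ha0' : a0 ≠ 0 := ha0.ne'
      have h1a' : (1 + a0 : ℝ) ≠ 0 := h1a.ne'
      have hv0' : v ≠ 0 := hv0.ne'
      have hL : a0 / 2 + a0 * (1 - a0) / (2 * (1 + a0)) = a0 / (1 + a0) := by
        field_simp; ring
      have hR : v * ((3 + a0) / 4) / 2 + v * (1 - (3 + a0) / 4) / 2 = v / 2 := by ring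
      rw [hL, hR]
      have h1 : a0 / 2 / (a0 / (1 + a0)) = (1 + a0) / 2 := by field_simp
      have h2 : v * ((3 + a0) / 4) / 2 / (v / 2) = (3 + a0) / 4 := by field_simp
      rw [h1, h2]
      linarith
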